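/- In the Edwards–Anderson model on a finite simple graph G = ([N], E): let i ≠ j ∈ [N] and S ⊆ E. If the graph ([N], S) contains no path connecting i and j, then the conditional expectation E[⟨σ_i σ_j⟩ | σ(J_e : e ∈ S)] = 0 almost surely. -/

import Mathlib

open MeasureTheory ProbabilityTheory Real Finset

noncomputable section

/-! ### Basic objects: spins, Hermite polynomials, Gaussian measures -/

/-- The `±1` spin value attached to a Boolean. -/
def spin (b : Bool) : ℝ := if b then 1 else -1

/-- Normalized Hermite polynomial `h_m = He_m / √(m!)`,
orthonormal w.r.t. the standard Gaussian measure. -/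
def hermiteFn (m : ℕ) (x : ℝ) : ℝ :=
  Polynomial.aeval x (Polynomial.hermite m) / Real.sqrt (Nat.factorial m)

/-- The law of a family of i.i.d. standard Gaussians over a finite index set. -/
def gaussianPi (ι : Type*) [Fintype ι] : Measure (ι → ℝ) :=
  Measure.pi fun _ => gaussianReal 0 1

instance (ι : Type*) [Fintype ι] : IsProbabilityMeasure (gaussianPi ι) := by
  unfold gaussianPi; infer_instance

/-- Tensorized normalized Hermite polynomial `h_n(x) = ∏_e h_{n_e}(x_e)`. -/
def hermiteProd {ι : Type*} [Fintype ι] (n : ι → ℕ) (x : ι → ℝ) : ℝ :=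
  ∏ e, hermiteFn (n e) (x e)

/-- Continuous perturbation `J(t) = e^{-t} J + √(1-e^{-2t}) J'` of the disorder. -/
def contPerturb {ι : Type*} (t : ℝ) (J J' : ι → ℝ) : ι → ℝ := fun e =>
  Real.exp (-t) * J e + Real.sqrt (1 - Real.exp (-2 * t)) * J' e

/-- Discrete perturbation `J(t)_e = B_e J_e + (1-B_e) J'_e` of the disorder. -/
def discPerturb {ι : Type*} (J J' : ι → ℝ) (B : ι → Bool) : ι → ℝ := fun e =>
  if B e then J e else J' e

/-- Bernoulli measure on `Bool` with success probability `p`. -/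
def berBool (p : ℝ) : Measure Bool :=
  ENNReal.ofReal p • Measure.dirac true + ENNReal.ofReal (1 - p) • Measure.dirac false

instance (p : ℝ) : IsFiniteMeasure (berBool p) := by
  constructor
  simp only [berBool, Measure.coe_add, Pi.add_apply, Measure.smul_apply, smul_eq_mul,
    Measure.dirac_apply' _ MeasurableSet.univ, Set.indicator_univ, Pi.one_apply, mul_one]
  exact ENNReal.add_lt_top.mpr ⟨ENNReal.ofReal_lt_top, ENNReal.ofReal_lt_top⟩

/-- Product Gaussian measure for a pair `(J, J')` of independent disorders. -/
def pairGauss (ι : Type*) [Fintype ι] : Measure ((ι → ℝ) × (ι → ℝ)) :=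
  (gaussianPi ι).prod (gaussianPi ι)

/-- Product Gaussian measure for a triple of independent disorders. -/
def tripleGauss (ι : Type*) [Fintype ι] : Measure ((ι → ℝ) × (ι → ℝ) × (ι → ℝ)) :=
  (gaussianPi ι).prod ((gaussianPi ι).prod (gaussianPi ι))

/-- Law of `(J, J', B)`: two independent Gaussian disorders together with i.i.d.
Bernoulli(`p`) variables. -/
def tripleGaussBer (ι : Type*) [Fintype ι] (p : ℝ) :
    Measure ((ι → ℝ) × (ι → ℝ) × (ι → Bool)) :=
  (gaussianPi ι).prod ((gaussianPi ι).prod (Measure.pi fun _ => berBool p))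

/-! ### Spin models on hypergraphs -/

variable {N : ℕ}

/-- `σ_e = ∏_{v ∈ e} σ_v`. -/
def sigEdge (σ : Fin N → Bool) (e : Finset (Fin N)) : ℝ := ∏ v ∈ e, spin (σ v)

/-- Hamiltonian `H_J(σ) = Σ_e ρ_{|e|}(J_e) σ_e` of the short-range model. -/
def ham (Edges : Finset (Finset (Fin N))) (ρ : ℕ → ℝ → ℝ)
    (J : Finset (Fin N) → ℝ) (σ : Fin N → Bool) : ℝ :=
  ∑ e ∈ Edges, ρ e.card (J e) * sigEdge σ e

/-- Gibbs average of an observable `f` for the Hamiltonian `H` at inverse temperature `β`. -/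
def gibbs (β : ℝ) (H : (Fin N → Bool) → ℝ) (f : (Fin N → Bool) → ℝ) : ℝ :=
  (∑ σ : Fin N → Bool, f σ * Real.exp (β * H σ)) / ∑ σ : Fin N → Bool, Real.exp (β * H σ)

/-- Gibbs average of a two-replica observable `f(σ,τ)` where `σ, τ` are sampled from the
product of the Gibbs measures of the Hamiltonians `H₁`, `H₂`. -/
def gibbs2 (β : ℝ) (H₁ H₂ : (Fin N → Bool) → ℝ)
    (f : (Fin N → Bool) → (Fin N → Bool) → ℝ) : ℝ :=
  (∑ σ : Fin N → Bool, ∑ τ : Fin N → Bool, f σ τ * Real.exp (β * H₁ σ + β * H₂ τ)) /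
    ∑ σ : Fin N → Bool, ∑ τ : Fin N → Bool, Real.exp (β * H₁ σ + β * H₂ τ)

/-- Site overlap `R(σ,τ) = N⁻¹ Σ_i σ_i τ_i`. -/
def overlap (σ τ : Fin N → Bool) : ℝ := (∑ i, spin (σ i) * spin (τ i)) / N

/-- Fourier–Hermite coefficient `φ̂_{ij}(n) = E[⟨σ_i σ_j⟩ h_n(J)]` of the two-point
correlation function. -/
def twoPointCoeff (Edges : Finset (Finset (Fin N))) (ρ : ℕ → ℝ → ℝ) (β : ℝ)
    (i j : Fin N) (n : Finset (Fin N) → ℕ) : ℝ :=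
  ∫ ω, gibbs β (ham Edges ρ ω) (fun σ => spin (σ i) * spin (σ j)) * hermiteProd n ω
    ∂gaussianPi (Finset (Fin N))

/-- `E(n) = {e : n_e > 0}`. -/
def Esupp (n : Finset (Fin N) → ℕ) : Finset (Finset (Fin N)) :=
  Finset.univ.filter fun e => n e ≠ 0

/-- `V(n)`: the vertices covered by `E(n)`. -/
def Vsupp (n : Finset (Fin N) → ℕ) : Finset (Fin N) :=
  (Esupp n).biUnion id

/-- Disorder-averaged two-replica observable under the continuous perturbation:
`E ⟨f(σ,τ)⟩_t` with `σ ~ G_J`, `τ ~ G_{J(t)}`. -/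
def contExp (Edges : Finset (Finset (Fin N))) (ρ : ℕ → ℝ → ℝ) (β t : ℝ)
    (f : (Fin N → Bool) → (Fin N → Bool) → ℝ) : ℝ :=
  ∫ ω : (Finset (Fin N) → ℝ) × (Finset (Fin N) → ℝ),
    gibbs2 β (ham Edges ρ ω.1) (ham Edges ρ (contPerturb t ω.1 ω.2)) f
    ∂pairGauss (Finset (Fin N))

/-- Disorder-averaged two-replica observable under the discrete perturbation. -/
def discExp (Edges : Finset (Finset (Fin N))) (ρ : ℕ → ℝ → ℝ) (β t : ℝ)
    (f : (Fin N → Bool) → (Fin N → Bool) → ℝ) : ℝ :=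
  ∫ ω : (Finset (Fin N) → ℝ) × (Finset (Fin N) → ℝ) × (Finset (Fin N) → Bool),
    gibbs2 β (ham Edges ρ ω.1) (ham Edges ρ (discPerturb ω.1 ω.2.1 ω.2.2)) f
    ∂tripleGaussBer (Finset (Fin N)) (Real.exp (-t))

/-! ### Berge paths, distance, balls, cycles -/

/-- `(vs, es)` is a Berge path of length `ℓ` from `v` to `w` in the hypergraph `Edges`. -/
def IsBergePath (Edges : Finset (Finset (Fin N))) (ℓ : ℕ)
    (vs : Fin (ℓ + 1) → Fin N) (es : Fin ℓ → Finset (Fin N)) (v w : Fin N) : Prop :=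
  Function.Injective vs ∧ Function.Injective es ∧ (∀ k, es k ∈ Edges) ∧
    vs 0 = v ∧ vs (Fin.last ℓ) = w ∧
    ∀ k : Fin ℓ, vs k.castSucc ∈ es k ∧ vs k.succ ∈ es k

/-- Hypergraph (Berge) distance between two vertices, `∞` if there is no path. -/
def hdist (Edges : Finset (Finset (Fin N))) (v w : Fin N) : ℕ∞ :=
  sInf {d : ℕ∞ | ∃ (ℓ : ℕ) (vs : Fin (ℓ + 1) → Fin N) (es : Fin ℓ → Finset (Fin N)),
    IsBergePath Edges ℓ vs es v w ∧ d = (ℓ : ℕ∞)}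

open scoped Classical in
/-- The closed ball `B_r(v)` in the hypergraph distance. -/
def hball (Edges : Finset (Finset (Fin N))) (v : Fin N) (r : ℕ) : Finset (Fin N) :=
  Finset.univ.filter fun w => hdist Edges v w ≤ (r : ℕ∞)

/-- The hypergraph `Edges` contains a Berge cycle. -/
def HasBergeCycle (Edges : Finset (Finset (Fin N))) : Prop :=
  ∃ (ℓ : ℕ) (vs : Fin ℓ → Fin N) (es : Fin ℓ → Finset (Fin N)),
    2 ≤ ℓ ∧ Function.Injective vs ∧ Function.Injective es ∧ (∀ k, es k ∈ Edges) ∧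
      ∀ k : Fin ℓ, vs k ∈ es k ∧ vs (finRotate ℓ k) ∈ es k

/-- `min(d, c)` where `d ∈ ℕ∞` and `c ∈ ℝ` (equal to `c` if `d = ∞`). -/
def truncMin (d : ℕ∞) (c : ℝ) : ℝ :=
  if d = ⊤ then c else min (d.toNat : ℝ) c

/-! ### The diluted mixed p-spin random hypergraph -/

/-- Probability that a given hyperedge is present in the diluted model. -/
def edgeProb (α : ℕ → ℝ) (Δ N : ℕ) (e : Finset (Fin N)) : ℝ :=
  if 2 ≤ e.card ∧ e.card ≤ Δ then α e.card * N / (N.choose e.card) else 0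

/-- The law of the diluted mixed `p`-spin random hypergraph: each hyperedge `e` with
`2 ≤ |e| ≤ Δ` is present independently with probability `α_{|e|} N / C(N,|e|)`. -/
def graphMeasure (α : ℕ → ℝ) (Δ N : ℕ) : Measure (Finset (Fin N) → Bool) :=
  Measure.pi fun e => berBool (edgeProb α Δ N e)

/-- The (random) hyperedge set determined by the indicator `g`. -/
def edgesOf {N : ℕ} (Δ : ℕ) (g : Finset (Fin N) → Bool) : Finset (Finset (Fin N)) :=
  Finset.univ.filter fun e => g e = true ∧ 2 ≤ e.card ∧ e.card ≤ Δ

/-- `λ = Σ_p p(p-1) α_p`. -/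
def lamMix (α : ℕ → ℝ) (Δ : ℕ) : ℝ :=
  ∑ p ∈ Finset.Icc 2 Δ, (p : ℝ) * ((p : ℝ) - 1) * α p

/-- `λ' = Σ_p p(p-1)(p-2) α_p`. -/
def lamMix' (α : ℕ → ℝ) (Δ : ℕ) : ℝ :=
  ∑ p ∈ Finset.Icc 2 Δ, (p : ℝ) * ((p : ℝ) - 1) * ((p : ℝ) - 2) * α p

/-- The exploration (breadth-first search) process `(R_t, I_t, S_t, E_t)` of a hypergraph
started at the vertex `i`. -/
def explore {N : ℕ} (Edges : Finset (Finset (Fin N))) (i : Fin N) :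
    ℕ → Finset (Fin N) × Finset (Fin N) × Finset (Fin N) × Finset (Finset (Fin N))
  | 0 => (∅, {i}, Finset.univ.erase i, ∅)
  | t + 1 =>
      let P := explore Edges i t
      let Enew := Edges.filter fun e => (e ∩ P.2.1).Nonempty ∧ e ∩ P.1 = ∅
      (P.1 ∪ P.2.1, Enew.biUnion fun e => e ∩ P.2.2.1,
        P.2.2.1 \ Enew.biUnion fun e => e ∩ P.2.2.1, Enew)

/-- The set `I_t` of newly explored vertices at step `t`. -/
def Iset {N : ℕ} (Edges : Finset (Finset (Fin N))) (i : Fin N) (t : ℕ) : Finset (Fin N) :=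
  (explore Edges i t).2.1

/-- Disorder-and-graph-averaged two-replica observable under the continuous perturbation
in the diluted model. -/
def dilContExp (α : ℕ → ℝ) (Δ N : ℕ) (ρ : ℕ → ℝ → ℝ) (β t : ℝ)
    (f : (Fin N → Bool) → (Fin N → Bool) → ℝ) : ℝ :=
  ∫ ω : (Finset (Fin N) → Bool) × (Finset (Fin N) → ℝ) × (Finset (Fin N) → ℝ),
    gibbs2 β (ham (edgesOf Δ ω.1) ρ ω.2.1)
      (ham (edgesOf Δ ω.1) ρ (contPerturb t ω.2.1 ω.2.2)) f
    ∂((graphMeasure α Δ N).prod (pairGauss (Finset (Fin N))))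

/-- Disorder-and-graph-averaged two-replica observable under the discrete perturbation
in the diluted model. -/
def dilDiscExp (α : ℕ → ℝ) (Δ N : ℕ) (ρ : ℕ → ℝ → ℝ) (β t : ℝ)
    (f : (Fin N → Bool) → (Fin N → Bool) → ℝ) : ℝ :=
  ∫ ω : (Finset (Fin N) → Bool) ×
      (Finset (Fin N) → ℝ) × (Finset (Fin N) → ℝ) × (Finset (Fin N) → Bool),
    gibbs2 β (ham (edgesOf Δ ω.1) ρ ω.2.1)
      (ham (edgesOf Δ ω.1) ρ (discPerturb ω.2.1 ω.2.2.1 ω.2.2.2)) f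
    ∂((graphMeasure α Δ N).prod (tripleGaussBer (Finset (Fin N)) (Real.exp (-t))))

/-! ### The Lévy model -/

/-- Hamiltonian of the Lévy model: `H(σ) = a_N⁻¹ Σ_{i,j} ρ(J_{ij}) σ_i σ_j`. -/
def levyHam (N : ℕ) (aN : ℝ) (ρ : ℝ → ℝ) (J : Fin N × Fin N → ℝ) (σ : Fin N → Bool) : ℝ :=
  (∑ p : Fin N × Fin N, ρ (J p) * (spin (σ p.1) * spin (σ p.2))) / aN

/-- The normalization `a_N = inf{x > 0 : P(|ρ(J)| > x) ≤ 1/N}`. -/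
def levyAN (ρ : ℝ → ℝ) (N : ℕ) : ℝ :=
  sInf {x : ℝ | 0 < x ∧ ((gaussianReal 0 1) {j | x < |ρ j|}).toReal ≤ 1 / N}

/-- The coupled free energy `F_N(t,λ)` of the Lévy model, with the two systems
perturbed by the Ornstein–Uhlenbeck flow at time `t`. -/
def levyF (N : ℕ) (β aN lam : ℝ) (ρ : ℝ → ℝ) (t : ℝ) : ℝ :=
  (∫ ω : (Fin N × Fin N → ℝ) × (Fin N × Fin N → ℝ) × (Fin N × Fin N → ℝ),
      Real.log (∑ σ : Fin N → Bool, ∑ τ : Fin N → Bool,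
        Real.exp (β * levyHam N aN ρ (fun p => Real.exp (-t / 2) * ω.1 p +
              Real.sqrt (1 - Real.exp (-t)) * ω.2.1 p) σ +
          β * levyHam N aN ρ (fun p => Real.exp (-t / 2) * ω.1 p +
              Real.sqrt (1 - Real.exp (-t)) * ω.2.2 p) τ +
          lam * N * overlap σ τ ^ 2))
    ∂tripleGauss (Fin N × Fin N)) / N

/-- The coupled free energy `F_N(∞,λ)`: the two systems carry independent disorders. -/
def levyFinf (N : ℕ) (β aN lam : ℝ) (ρ : ℝ → ℝ) : ℝ :=
  (∫ ω : (Fin N × Fin N → ℝ) × (Fin N × Fin N → ℝ) × (Fin N × Fin N → ℝ),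
      Real.log (∑ σ : Fin N → Bool, ∑ τ : Fin N → Bool,
        Real.exp (β * levyHam N aN ρ ω.2.1 σ + β * levyHam N aN ρ ω.2.2 τ +
          lam * N * overlap σ τ ^ 2))
    ∂tripleGauss (Fin N × Fin N)) / N

/-- `φ(t) = Σ_r E[L_r(J¹(t)) L_r(J²(t))]` where `J^i(t) = e^{-t/2} J + √(1-e^{-t}) J^i`. -/
def phiFn (k m : ℕ) (L : Fin m → (Fin k → ℝ) → ℝ) (t : ℝ) : ℝ :=
  ∑ r : Fin m, ∫ ω : (Fin k → ℝ) × (Fin k → ℝ) × (Fin k → ℝ),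
    L r (fun l => Real.exp (-t / 2) * ω.1 l + Real.sqrt (1 - Real.exp (-t)) * ω.2.1 l) *
      L r (fun l => Real.exp (-t / 2) * ω.1 l + Real.sqrt (1 - Real.exp (-t)) * ω.2.2 l)
    ∂tripleGauss (Fin k)


/-! ### Auxiliary lemmas for stmt3 -/

section Aux

lemma pair_eq_of_card_two {α : Type*} [DecidableEq α] {e : Finset α} {a b : α}
    (h2 : e.card = 2) (ha : a ∈ e) (hb : b ∈ e) (hab : a ≠ b) : e = {a, b} := by
  refine (Finset.eq_of_subset_of_card_le ?_ ?_).symm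
  · intro z hz
    rcases Finset.mem_insert.1 hz with rfl | hz
    · exact ha
    · rwa [Finset.mem_singleton.1 hz]
  · rw [Finset.card_pair hab, h2]

lemma walk_getVert_inj {V : Type*} {G : SimpleGraph V} {u v : V} (p : G.Walk u v)
    (hp : p.IsPath) : ∀ m n : ℕ, m ≤ p.length → n ≤ p.length →
      p.getVert m = p.getVert n → m = n := by
  induction p with
  | nil => intro m n hm hn _; simp only [SimpleGraph.Walk.length_nil, Nat.le_zero] at hm hn; omega
  | @cons a b c h q ih =>
    rw [SimpleGraph.Walk.cons_isPath_iff] at hp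
    intro m n hm hn heq
    match m, n with
    | 0, 0 => rfl
    | 0, n+1 =>
      exfalso
      apply hp.2
      rw [SimpleGraph.Walk.mem_support_iff_exists_getVert]
      refine ⟨n, ?_, by simpa [SimpleGraph.Walk.length_cons] using hn⟩
      simpa [SimpleGraph.Walk.getVert_zero, SimpleGraph.Walk.getVert_cons_succ] using heq.symm
    | m+1, 0 =>
      exfalso
      apply hp.2
      rw [SimpleGraph.Walk.mem_support_iff_exists_getVert]
      refine ⟨m, ?_, by simpa [SimpleGraph.Walk.length_cons] using hm⟩
      simpa [SimpleGraph.Walk.getVert_zero, SimpleGraph.Walk.getVert_cons_succ] using heq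
    | m+1, n+1 =>
      have := ih hp.1 m n (by simpa [SimpleGraph.Walk.length_cons] using hm)
        (by simpa [SimpleGraph.Walk.length_cons] using hn)
        (by simpa [SimpleGraph.Walk.getVert_cons_succ] using heq)
      omega

/-- The simple graph associated to a 2-uniform set system. -/
def adjS {N : ℕ} (S : Finset (Finset (Fin N))) : SimpleGraph (Fin N) where
  Adj v w := v ≠ w ∧ ∃ e ∈ S, v ∈ e ∧ w ∈ e
  symm := ⟨by rintro v w ⟨hne, e, he, hv, hw⟩; exact ⟨hne.symm, e, he, hw, hv⟩⟩
  loopless := ⟨fun v hv => hv.1 rfl⟩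

lemma exists_bergePath_of_reachable {N : ℕ} (S : Finset (Finset (Fin N)))
    (hcard : ∀ e ∈ S, e.card = 2) {i j : Fin N} (h : (adjS S).Reachable i j) :
    ∃ (ℓ : ℕ) (vs : Fin (ℓ + 1) → Fin N) (es : Fin ℓ → Finset (Fin N)),
      IsBergePath S ℓ vs es i j := by
  classical
  obtain ⟨w⟩ := h
  obtain ⟨q, hq⟩ := w.toPath
  set ℓ := q.length with hℓ
  have hgv := walk_getVert_inj q hq
  have hadj : ∀ k : Fin ℓ, ∃ e, e ∈ S ∧ q.getVert k ∈ e ∧ q.getVert (k + 1) ∈ e := by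
    intro k
    have := q.adj_getVert_succ (i := k) k.isLt
    exact ⟨this.2.choose, this.2.choose_spec.1, this.2.choose_spec.2⟩
  choose es hesS hes1 hes2 using hadj
  refine ⟨ℓ, fun k => q.getVert k, es, ?_, ?_, hesS, ?_, ?_, ?_⟩
  · intro k l hkl
    exact Fin.ext (hgv k l (Nat.lt_succ_iff.1 k.isLt) (Nat.lt_succ_iff.1 l.isLt) hkl)
  · -- injectivity of es
    intro k l hkl
    have hne : ∀ m : Fin ℓ, (q.getVert (m : ℕ)) ≠ q.getVert ((m : ℕ) + 1) := by
      intro m hEq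
      have := hgv m (m + 1) (le_of_lt m.isLt) m.isLt hEq
      omega
    have hpair : ∀ m : Fin ℓ, es m = {q.getVert (m : ℕ), q.getVert ((m : ℕ) + 1)} :=
      fun m => pair_eq_of_card_two (hcard _ (hesS m)) (hes1 m) (hes2 m) (hne m)
    have h1 : q.getVert (k : ℕ) ∈ es l := by rw [← hkl]; exact hes1 k
    have h2 : q.getVert ((k : ℕ) + 1) ∈ es l := by rw [← hkl]; exact hes2 k
    rw [hpair l, Finset.mem_insert, Finset.mem_singleton] at h1 h2
    have hc1 : (k : ℕ) = l ∨ (k : ℕ) = l + 1 :=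
      h1.imp (fun h => hgv _ _ (le_of_lt k.isLt) (le_of_lt l.isLt) h)
        (fun h => hgv _ _ (le_of_lt k.isLt) l.isLt h)
    have hc2 : (k : ℕ) + 1 = l ∨ (k : ℕ) + 1 = l + 1 :=
      h2.imp (fun h => hgv _ _ k.isLt (le_of_lt l.isLt) h) (fun h => hgv _ _ k.isLt l.isLt h)
    exact Fin.ext (by omega)
  · exact q.getVert_zero
  · show q.getVert ((Fin.last ℓ : Fin (ℓ+1)) : ℕ) = j
    rw [Fin.val_last, hℓ]; exact q.getVert_length
  · intro k
    exact ⟨hes1 k, hes2 k⟩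

end Aux

section Flip

lemma gaussianReal_map_pm {c : ℝ} (hc : c = 1 ∨ c = -1) :
    (gaussianReal 0 1).map (c * ·) = gaussianReal 0 1 := by
  rw [ProbabilityTheory.gaussianReal_map_const_mul]
  have h0 : c * 0 = 0 := mul_zero c
  have h1 : (⟨c ^ 2, sq_nonneg c⟩ : NNReal) * 1 = 1 := by
    ext; rcases hc with rfl | rfl <;> norm_num
  rw [h0]; congr 1

lemma measurable_flipMul {ι : Type*} [Fintype ι] (c : ι → ℝ) :
    Measurable (fun ω : ι → ℝ => fun e => c e * ω e) :=
  measurable_pi_lambda _ fun e => (measurable_pi_apply e).const_mul _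

lemma measurePreserving_flipMul {ι : Type*} [Fintype ι] (c : ι → ℝ)
    (hc : ∀ e, c e = 1 ∨ c e = -1) :
    MeasurePreserving (fun ω : ι → ℝ => fun e => c e * ω e)
      (gaussianPi ι) (gaussianPi ι) := by
  refine ⟨measurable_flipMul c, ?_⟩
  show Measure.map _ (gaussianPi ι) = Measure.pi fun _ => gaussianReal 0 1
  refine (Measure.pi_eq fun s hs => ?_).symm
  rw [Measure.map_apply (measurable_flipMul c) (MeasurableSet.univ_pi hs)]
  have hpre : (fun ω : ι → ℝ => fun e => c e * ω e) ⁻¹' Set.pi Set.univ s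
      = Set.pi Set.univ fun e => (c e * ·) ⁻¹' s e := by
    ext ω; simp [Set.mem_pi]
  rw [hpre]
  show Measure.pi (fun _ => gaussianReal 0 1) _ = _
  rw [Measure.pi_pi]
  refine Finset.prod_congr rfl fun e _ => ?_
  calc (gaussianReal 0 1) ((c e * ·) ⁻¹' s e)
      = ((gaussianReal 0 1).map (c e * ·)) (s e) :=
        (Measure.map_apply (measurable_const_mul _) (hs e)).symm
    _ = (gaussianReal 0 1) (s e) := by rw [gaussianReal_map_pm (hc e)]

/-- Sign-flip of coordinates as a measurable equivalence. -/
def flipEquiv {ι : Type*} [Fintype ι] (c : ι → ℝ) (hc : ∀ e, c e = 1 ∨ c e = -1) :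
    (ι → ℝ) ≃ᵐ (ι → ℝ) where
  toFun ω e := c e * ω e
  invFun ω e := c e * ω e
  left_inv ω := funext fun e => by
    show c e * (c e * ω e) = ω e
    rcases hc e with h | h <;> rw [h] <;> ring
  right_inv ω := funext fun e => by
    show c e * (c e * ω e) = ω e
    rcases hc e with h | h <;> rw [h] <;> ring
  measurable_toFun := measurable_flipMul c
  measurable_invFun := measurable_flipMul c

end Flip

section Gibbs

variable {N : ℕ}

lemma signProd_pm (A : Set (Fin N)) [DecidablePred (· ∈ A)] (e : Finset (Fin N)) :
    (∏ v ∈ e, (if v ∈ A then (-1 : ℝ) else 1)) = 1 ∨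
      (∏ v ∈ e, (if v ∈ A then (-1 : ℝ) else 1)) = -1 := by
  refine Finset.prod_induction _ (fun x => x = 1 ∨ x = -1) ?_ (Or.inl rfl) ?_
  · rintro x y (rfl | rfl) (rfl | rfl) <;> norm_num
  · intro v _
    by_cases hv : v ∈ A <;> simp [hv]

lemma spin_not (b : Bool) : spin (!b) = - spin b := by cases b <;> simp [spin]

lemma gibbs_sign (Edges : Finset (Finset (Fin N))) (ρ : ℝ → ℝ)
    (hρodd : ∀ x, ρ (-x) = -ρ x) (β : ℝ) (i j : Fin N)
    (A : Set (Fin N)) [DecidablePred (· ∈ A)] (hi : i ∈ A) (hj : j ∉ A)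
    (ω : Finset (Fin N) → ℝ) :
    gibbs β (ham Edges (fun _ => ρ)
        (fun e => (∏ v ∈ e, (if v ∈ A then (-1 : ℝ) else 1)) * ω e))
      (fun σ => spin (σ i) * spin (σ j))
    = - gibbs β (ham Edges (fun _ => ρ) ω) (fun σ => spin (σ i) * spin (σ j)) := by
  set c : Finset (Fin N) → ℝ := fun e => ∏ v ∈ e, (if v ∈ A then (-1 : ℝ) else 1) with hcdef
  have hc : ∀ e, c e = 1 ∨ c e = -1 := signProd_pm A
  set flip : (Fin N → Bool) → (Fin N → Bool) :=
    fun σ v => if v ∈ A then !(σ v) else σ v with hflipdef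
  have hinv : Function.Involutive flip := by
    intro σ; funext v; by_cases hv : v ∈ A <;> simp [hflipdef, hv]
  have hspin : ∀ (σ : Fin N → Bool) (v : Fin N),
      spin (flip σ v) = (if v ∈ A then (-1 : ℝ) else 1) * spin (σ v) := by
    intro σ v; by_cases hv : v ∈ A <;> simp [hflipdef, hv, spin_not]
  have hsig : ∀ (σ : Fin N → Bool) (e : Finset (Fin N)),
      sigEdge (flip σ) e = c e * sigEdge σ e := by
    intro σ e
    simp only [sigEdge, hcdef]
    rw [← Finset.prod_mul_distrib]
    exact Finset.prod_congr rfl fun v _ => hspin σ v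
  have hham : ∀ σ : Fin N → Bool,
      ham Edges (fun _ => ρ) (fun e => c e * ω e) σ
        = ham Edges (fun _ => ρ) ω (flip σ) := by
    intro σ
    simp only [ham]
    refine Finset.sum_congr rfl fun e _ => ?_
    rw [hsig σ e]
    rcases hc e with h | h
    · rw [h, one_mul, one_mul]
    · rw [h, neg_one_mul, neg_one_mul, hρodd, neg_mul, mul_neg]
  have reidx : ∀ g : (Fin N → Bool) → ℝ, ∑ σ, g (flip σ) = ∑ σ, g σ := fun g =>
    Equiv.sum_comp (Function.Involutive.toPerm flip hinv) g
  have hobs : ∀ σ : Fin N → Bool,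
      spin (flip σ i) * spin (flip σ j) = -(spin (σ i) * spin (σ j)) := by
    intro σ
    rw [hspin σ i, hspin σ j, if_pos hi, if_neg hj]
    ring
  have hden : (∑ σ : Fin N → Bool,
        Real.exp (β * ham Edges (fun _ => ρ) (fun e => c e * ω e) σ))
      = ∑ σ : Fin N → Bool, Real.exp (β * ham Edges (fun _ => ρ) ω σ) := by
    rw [← reidx fun σ => Real.exp (β * ham Edges (fun _ => ρ) ω σ)]
    exact Finset.sum_congr rfl fun σ _ => by rw [hham σ]
  have hnum : (∑ σ : Fin N → Bool, spin (σ i) * spin (σ j) *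
        Real.exp (β * ham Edges (fun _ => ρ) (fun e => c e * ω e) σ))
      = -∑ σ : Fin N → Bool, spin (σ i) * spin (σ j) *
          Real.exp (β * ham Edges (fun _ => ρ) ω σ) := by
    have step1 : (∑ σ : Fin N → Bool, spin (σ i) * spin (σ j) *
          Real.exp (β * ham Edges (fun _ => ρ) (fun e => c e * ω e) σ))
        = ∑ σ : Fin N → Bool, spin (σ i) * spin (σ j) *
            Real.exp (β * ham Edges (fun _ => ρ) ω (flip σ)) :=
      Finset.sum_congr rfl fun σ _ => by rw [hham σ]
    have step2 : (∑ σ : Fin N → Bool, spin (σ i) * spin (σ j) *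
          Real.exp (β * ham Edges (fun _ => ρ) ω (flip σ)))
        = ∑ σ : Fin N → Bool, spin (flip σ i) * spin (flip σ j) *
            Real.exp (β * ham Edges (fun _ => ρ) ω σ) := by
      rw [← reidx fun σ => spin (flip σ i) * spin (flip σ j) *
        Real.exp (β * ham Edges (fun _ => ρ) ω σ)]
      refine Finset.sum_congr rfl fun σ _ => by rw [hinv σ]
    rw [step1, step2, ← Finset.sum_neg_distrib]
    exact Finset.sum_congr rfl fun σ _ => by rw [hobs σ]; ring
  show gibbs β (ham Edges (fun _ => ρ) (fun e => c e * ω e)) _ = _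
  simp only [gibbs, hnum, hden, neg_div]

end Gibbs

section FBound

variable {N : ℕ}

lemma spin_abs (b : Bool) : |spin b| = 1 := by cases b <;> simp [spin]

lemma gibbs_meas (Edges : Finset (Finset (Fin N))) (ρ : ℝ → ℝ) (hρmeas : Measurable ρ)
    (β : ℝ) (i j : Fin N) :
    Measurable (fun ω : Finset (Fin N) → ℝ =>
      gibbs β (ham Edges (fun _ => ρ) ω) fun σ => spin (σ i) * spin (σ j)) := by
  have hham : ∀ σ : Fin N → Bool,
      Measurable (fun ω : Finset (Fin N) → ℝ => ham Edges (fun _ => ρ) ω σ) := by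
    intro σ
    simp only [ham]
    exact Finset.measurable_sum _ fun e _ =>
      (hρmeas.comp (measurable_pi_apply e)).mul_const _
  simp only [gibbs]
  refine Measurable.div ?_ ?_
  · exact Finset.measurable_sum _ fun σ _ =>
      (((hham σ).const_mul β).exp).const_mul _
  · exact Finset.measurable_sum _ fun σ _ => ((hham σ).const_mul β).exp

lemma gibbs_abs_le (β : ℝ) (H : (Fin N → Bool) → ℝ) (i j : Fin N) :
    |gibbs β H fun σ => spin (σ i) * spin (σ j)| ≤ 1 := by
  have hden : 0 < ∑ σ : Fin N → Bool, Real.exp (β * H σ) :=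
    Finset.sum_pos (fun σ _ => Real.exp_pos _) Finset.univ_nonempty
  rw [gibbs, abs_div, abs_of_pos hden, div_le_one hden]
  calc |∑ σ : Fin N → Bool, spin (σ i) * spin (σ j) * Real.exp (β * H σ)|
      ≤ ∑ σ : Fin N → Bool, |spin (σ i) * spin (σ j) * Real.exp (β * H σ)| :=
        Finset.abs_sum_le_sum_abs _ _
    _ ≤ ∑ σ : Fin N → Bool, Real.exp (β * H σ) := by
        refine Finset.sum_le_sum fun σ _ => ?_
        rw [abs_mul, abs_mul, spin_abs, spin_abs, abs_of_pos (Real.exp_pos _)]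
        norm_num

end FBound

/-- A bounded integrable observable that is odd under a measure-preserving involution fixing
the conditioning coordinates has vanishing conditional expectation. -/
lemma condexp_eq_zero_of_sign_symm {α : Type*} [MeasurableSpace α] (μ : Measure α)
    [IsProbabilityMeasure μ] {γ : Type*} [MeasurableSpace γ] (prj : α → γ)
    (hprj : Measurable prj) (T : α → α) (hT : MeasurableEmbedding T)
    (hMP : MeasurePreserving T μ μ) (hprjT : ∀ x, prj (T x) = prj x)
    (f : α → ℝ) (hfint : Integrable f μ) (hfT : ∀ x, f (T x) = - f x) :
    μ[f | MeasurableSpace.comap prj inferInstance] =ᵐ[μ] 0 := by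
  have hm : MeasurableSpace.comap prj inferInstance ≤ ‹MeasurableSpace α› := hprj.comap_le
  have hzero : ∀ s : Set α, MeasurableSet[MeasurableSpace.comap prj inferInstance] s →
      ∫ x in s, f x ∂μ = 0 := by
    intro s hs
    obtain ⟨C, hC, rfl⟩ := hs
    have hsm : MeasurableSet (prj ⁻¹' C) := hprj hC
    have hind : ∀ x, (prj ⁻¹' C).indicator f (T x) = - (prj ⁻¹' C).indicator f x := by
      intro x
      by_cases hx : x ∈ prj ⁻¹' C
      · have hTx : T x ∈ prj ⁻¹' C := by
          show prj (T x) ∈ C; rw [hprjT x]; exact hx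
        rw [Set.indicator_of_mem hx, Set.indicator_of_mem hTx, hfT]
      · have hTx : T x ∉ prj ⁻¹' C := by
          show prj (T x) ∉ C; rw [hprjT x]; exact hx
        rw [Set.indicator_of_notMem hx, Set.indicator_of_notMem hTx, neg_zero]
    have key : ∫ x in prj ⁻¹' C, f x ∂μ = - ∫ x in prj ⁻¹' C, f x ∂μ := by
      calc ∫ x in prj ⁻¹' C, f x ∂μ
          = ∫ x, (prj ⁻¹' C).indicator f x ∂μ := (integral_indicator hsm).symm
        _ = ∫ x, (prj ⁻¹' C).indicator f (T x) ∂μ :=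
            (hMP.integral_comp hT ((prj ⁻¹' C).indicator f)).symm
        _ = ∫ x, - (prj ⁻¹' C).indicator f x ∂μ :=
            integral_congr_ae (ae_of_all _ hind)
        _ = - ∫ x, (prj ⁻¹' C).indicator f x ∂μ := integral_neg _
        _ = - ∫ x in prj ⁻¹' C, f x ∂μ := by rw [integral_indicator hsm]
    linarith
  haveI : IsFiniteMeasure (μ.trim hm) := isFiniteMeasure_trim hm
  have h0 : (0 : α → ℝ) =ᵐ[μ] μ[f | MeasurableSpace.comap prj inferInstance] := by
    refine ae_eq_condExp_of_forall_setIntegral_eq hm hfint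
      (fun s _ _ => integrableOn_zero) (fun s hs _ => ?_)
      (StronglyMeasurable.aestronglyMeasurable stronglyMeasurable_const)
    simp only [Pi.zero_apply, integral_zero]
    exact (hzero s hs).symm
  exact h0.symm

/-- In the Edwards–Anderson model on a finite simple graph, if `S ⊆ E`
contains no path connecting `i` and `j`, then `E[⟨σ_i σ_j⟩ | J_e, e ∈ S] = 0` a.s. -/
theorem stmt3
    (N : ℕ) (hN : 1 ≤ N)
    (Edges : Finset (Finset (Fin N))) (hcard : ∀ e ∈ Edges, e.card = 2)
    (ρ : ℝ → ℝ) (hρmeas : Measurable ρ) (hρodd : ∀ x, ρ (-x) = - ρ x)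
    (β : ℝ) (hβ : 0 ≤ β)
    (i j : Fin N) (hij : i ≠ j)
    (S : Finset (Finset (Fin N))) (hS : S ⊆ Edges)
    (hnopath : ¬ ∃ (ℓ : ℕ) (vs : Fin (ℓ + 1) → Fin N) (es : Fin ℓ → Finset (Fin N)),
      IsBergePath S ℓ vs es i j) :
    (gaussianPi (Finset (Fin N)))[
        (fun ω => gibbs β (ham Edges (fun _ => ρ) ω) fun σ => spin (σ i) * spin (σ j)) |
        MeasurableSpace.comap
          (fun (ω : Finset (Fin N) → ℝ) (e : {e : Finset (Fin N) // e ∈ S}) => ω e.1)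
          inferInstance]
      =ᵐ[gaussianPi (Finset (Fin N))] 0 := by
  classical
  set A : Set (Fin N) := {v | (adjS S).Reachable i v} with hAdef
  have hiA : i ∈ A := SimpleGraph.Reachable.refl i
  have hjA : j ∉ A := fun h =>
    hnopath (exists_bergePath_of_reachable S (fun e he => hcard e (hS he)) h)
  have hclosure : ∀ e ∈ S, ∀ v ∈ e, v ∈ A → ∀ w ∈ e, w ∈ A := by
    intro e he v hv hvA w hw
    by_cases hvw : v = w
    · exact hvw ▸ hvA
    · exact hvA.trans (SimpleGraph.Adj.reachable ⟨hvw, e, he, hv, hw⟩)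
  set c : Finset (Fin N) → ℝ := fun e => ∏ v ∈ e, (if v ∈ A then (-1 : ℝ) else 1)
    with hcdef
  have hc : ∀ e, c e = 1 ∨ c e = -1 := signProd_pm A
  have hcS : ∀ e ∈ S, c e = 1 := by
    intro e he
    by_cases hex : ∃ v ∈ e, v ∈ A
    · obtain ⟨v, hv, hvA⟩ := hex
      have hall : ∀ w ∈ e, w ∈ A := hclosure e he v hv hvA
      have : c e = ∏ _v ∈ e, (-1 : ℝ) :=
        Finset.prod_congr rfl fun w hw => if_pos (hall w hw)
      rw [this, Finset.prod_const, hcard e (hS he)]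
      norm_num
    · push_neg at hex
      have : c e = ∏ _v ∈ e, (1 : ℝ) :=
        Finset.prod_congr rfl fun w hw => if_neg (hex w hw)
      rw [this, Finset.prod_const, one_pow]
  refine condexp_eq_zero_of_sign_symm _ _
    (measurable_pi_lambda _ fun e => measurable_pi_apply e.1)
    (fun ω e => c e * ω e) (flipEquiv c hc).measurableEmbedding
    (measurePreserving_flipMul c hc) ?_ _ ?_ ?_
  · intro ω; funext e
    show c e.1 * ω e.1 = ω e.1
    rw [hcS e.1 e.2, one_mul]
  · refine (integrable_const (1 : ℝ)).mono'
      (gibbs_meas Edges ρ hρmeas β i j).aestronglyMeasurable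
      (ae_of_all _ fun ω => by
        simpa using gibbs_abs_le β (ham Edges (fun _ => ρ) ω) i j)
  · intro ω
    exact gibbs_sign Edges ρ hρodd β i j A hiA hjA ω
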